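/- Let q = 2^m and suppose f(x) = x + α x^{q(q-1)+1} + β x^{2(q-1)+1} with α, β ∈ F_{q^2}^*, β(1 + α^{q+1} + β^{q+1}) + α^{2q} = 0, β^{q+1} ≠ 1, and Tr(β^{q+1}/α^{q+1}) = 0. Then f permutes F_{q^2}. -/

import Mathlib

/-- The absolute trace `Tr(z) = z + z^2 + z^4 + ⋯ + z^{2^{m-1}}`, computed inside the field. -/
def traceSum {F : Type*} [Field F] (m : ℕ) (z : F) : F :=
  ∑ j ∈ Finset.range m, z ^ 2 ^ j

section helpers

variable {E : Type*} [Field E] [CharP E 2]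

private lemma frob_add (m : ℕ) (a b : E) : (a+b)^(2^m) = a^(2^m)+b^(2^m) :=
  add_pow_char_pow a b 2 m

private lemma traceSum_add' (m : ℕ) (a b : E) :
    traceSum m (a+b) = traceSum m a + traceSum m b := by
  unfold traceSum
  rw [← Finset.sum_add_distrib]
  exact Finset.sum_congr rfl fun j _ => add_pow_char_pow a b 2 j

set_option linter.unusedSectionVars false in
private lemma traceSum_sq (m : ℕ) (z : E) :
    traceSum m z + z^(2^m) = traceSum m (z^2) + z := by
  have h1 : ∑ j ∈ Finset.range (m+1), z ^ 2 ^ j = traceSum m z + z^(2^m) :=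
    Finset.sum_range_succ _ m
  have h2 : ∑ j ∈ Finset.range (m+1), z ^ 2 ^ j = traceSum m (z^2) + z := by
    rw [Finset.sum_range_succ' (fun j => z ^ 2 ^ j) m]
    congr 1
    · exact Finset.sum_congr rfl fun j _ => by rw [← pow_mul, ← pow_succ']
    · simp
  rw [← h1, h2]

private lemma traceSum_artin1 (m : ℕ) (z : E) (hz : z^(2^m) = z + 1) :
    traceSum m (z^2+z) = 1 := by
  have htwo : (2:E) = 0 := CharTwo.two_eq_zero
  have hA := traceSum_add' m (z^2) z
  have hB := traceSum_sq m z
  linear_combination hA + hB + hz + (traceSum m (z^2) + z - z^(2^m))*htwo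

private lemma traceSum_artin0 (m : ℕ) (z : E) (hz : z^(2^m) = z) :
    traceSum m (z^2+z) = 0 := by
  have htwo : (2:E) = 0 := CharTwo.two_eq_zero
  have hA := traceSum_add' m (z^2) z
  have hB := traceSum_sq m z
  linear_combination hA + hB + hz + (traceSum m (z^2) + z - z^(2^m))*htwo

/-- Main lemma A: under the stated hypotheses the cubic `β y³ + y + α` has
no root on the "unit circle" `y^(q+1) = 1`. -/
private lemma keyD (m : ℕ) (α β : E) (hα : α ≠ 0) (hβ : β ≠ 0)
    (hfr : ∀ a : E, (a^(2^m))^(2^m) = a)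
    (h1 : β*(1 + α^(2^m)*α + β^(2^m)*β) + (α^(2^m))^2 = 0)
    (h3 : traceSum m ((β^(2^m)*β)/(α^(2^m)*α)) = 0)
    (y : E) (hy : y^(2^m)*y = 1) : β*y^3 + y + α ≠ 0 := by
  have htwo : (2:E) = 0 := CharTwo.two_eq_zero
  have hy0 : y ≠ 0 := by
    intro h; rw [h] at hy; simp at hy
  have hαq : α^(2^m) ≠ 0 := pow_ne_zero _ hα
  have hβq : β^(2^m) ≠ 0 := pow_ne_zero _ hβ
  intro hD0
  have hDq : β^(2^m)*(y^(2^m))^3 + y^(2^m) + α^(2^m) = 0 := by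
    have h := congrArg (· ^ (2^m)) hD0
    rw [frob_add, frob_add, mul_pow, pow_right_comm,
      zero_pow (Nat.pos_of_ne_zero (by positivity)).ne'] at h
    exact h
  have e2 : α^(2^m)*y^3 + y^2 + β^(2^m) = 0 := by
    linear_combination (y^3)*hDq + (-(β^(2^m)) - y*(y^(2^m))*(β^(2^m)) - y^2 - y^2*(y^(2^m))^2*(β^(2^m)))*hy
  have estar : β*y^2 + α^(2^m)*y + (α^(2^m)*α + β^(2^m)*β) = 0 := by
    linear_combination ((α^(2^m)))*hD0 + (β)*e2 + (-y^3*β*(α^(2^m)))*htwo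
  have estar2 : α^(2^m)*y^2 + (1+α^(2^m)*α+β^(2^m)*β)*y + α = 0 := by
    linear_combination (y)*estar + (-1)*hD0 + (α + y)*htwo
  have e5 : α*β = α^(2^m)*(α^(2^m)*α+β^(2^m)*β) := by
    linear_combination (β)*estar2 + ((α^(2^m)))*estar + (y)*h1 + (-β*(α^(2^m))*(β^(2^m)) - α*(α^(2^m))^2 - y*(α^(2^m))^2 - y*β - y*β^2*(β^(2^m)) - y*α*β*(α^(2^m)) - y^2*β*(α^(2^m)))*htwo
  have hs0 : (α^(2^m)*α+β^(2^m)*β) ≠ 0 := by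
    intro h
    rw [h, mul_zero] at e5
    exact hα (by simpa [hβ] using e5)
  have hs0q : (α^(2^m)*α+β^(2^m)*β)^(2^m) = α^(2^m)*α+β^(2^m)*β := by
    rw [frob_add, mul_pow, mul_pow, hfr, hfr]; ring
  have e5q : α^(2^m)*β^(2^m) = α*(α^(2^m)*α+β^(2^m)*β) := by
    have h := congrArg (· ^ (2^m)) e5
    simp only [mul_pow, hfr, hs0q] at h
    exact h
  have hcan : (α^(2^m)*α)*(β^(2^m)*β) = (α^(2^m)*α)*(α^(2^m)*α+β^(2^m)*β)^2 := by
    linear_combination ((α^(2^m))*(β^(2^m)))*e5 + (β*(α^(2^m))*(β^(2^m)) + α*(α^(2^m))^2)*e5q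
  have e6 : β^(2^m)*β = (α^(2^m)*α+β^(2^m)*β)^2 :=
    mul_left_cancel₀ (mul_ne_zero hαq hα) hcan
  have hA' : α^(2^m)*α = (α^(2^m)*α+β^(2^m)*β)*(1+(α^(2^m)*α+β^(2^m)*β)) := by
    linear_combination (-1)*e6 + (-β^2*(β^(2^m))^2 - 2*α*β*(α^(2^m))*(β^(2^m)) - α^2*(α^(2^m))^2)*htwo
  have hz2' : β^(2^m)*β*(y^(2^m)*y)*α^(2^m) = α*β^2*y^2 + α*β*y*α^(2^m) := by
    linear_combination (β*(α^(2^m))*(β^(2^m)))*hy + (-α*β)*estar + ((α^(2^m)))*e6 + (β*(β^(2^m)) + α*(α^(2^m)))*e5 + (β^2*(α^(2^m))*(β^(2^m))^2 + 2*α*β*(α^(2^m))^2*(β^(2^m)) + α^2*(α^(2^m))^3)*htwo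
  have hnum : β^(2^m)*y^(2^m)*α^(2^m) = α*β*y + α*α^(2^m) :=
    mul_left_cancel₀ (mul_ne_zero hβ hy0) (by linear_combination hz2')
  have hBA' : β^(2^m)*β*(α^(2^m))^2 = (α^(2^m)*α)*(β*y)*(β*y+α^(2^m)) := by
    linear_combination ((α^(2^m))^2)*e6 + (β^2*(β^(2^m))^2 + 2*α*β*(α^(2^m))*(β^(2^m)) + α^2*(α^(2^m))^2)*h1 + (-α*β*(α^(2^m)))*estar + (β^2*(β^(2^m)) + α*β*(α^(2^m)))*hA'
  have hzq1 : (β*y/α^(2^m))^(2^m) = β*y/α^(2^m) + 1 := by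
    rw [div_pow, mul_pow, hfr]
    field_simp
    linear_combination hnum
  have hTr1 : traceSum m ((β*y/α^(2^m))^2+(β*y/α^(2^m))) = 1 := traceSum_artin1 m _ hzq1
  have hBA : (β^(2^m)*β)/(α^(2^m)*α) = (β*y/α^(2^m))^2+(β*y/α^(2^m)) := by
    field_simp
    apply mul_left_cancel₀ (mul_ne_zero hβ hαq)
    linear_combination hBA'
  rw [hBA] at h3
  rw [h3] at hTr1
  exact one_ne_zero hTr1.symm

set_option maxHeartbeats 2000000 in
/-- Main lemma B: the symmetrized pair-equation `P(s,t) = 0` is impossible. -/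
private lemma keyP (m : ℕ) (α β : E) (hα : α ≠ 0) (hβ : β ≠ 0)
    (hfr : ∀ a : E, (a^(2^m))^(2^m) = a)
    (h1 : β*(1 + α^(2^m)*α + β^(2^m)*β) + (α^(2^m))^2 = 0)
    (h1q : β^(2^m)*(1 + α^(2^m)*α + β^(2^m)*β) + α^2 = 0)
    (h2 : β^(2^m)*β ≠ 1)
    (h3 : traceSum m ((β^(2^m)*β)/(α^(2^m)*α)) = 0)
    (s t : E) (hs : s ≠ 0) (ht : t ≠ 0)
    (hst : s^(2^m)*t = s) (htt : t^(2^m)*t = 1)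
    (z : E) (hz1 : z^2+z = t/s^2) (hzq : z^(2^m) = z+1)
    (hP : α^(2^m)*t*s + (α^(2^m)*α+β^(2^m)*β)*(s^2+t) + β*t^2 + t + α*s + β^(2^m) = 0)
    : False := by
  have htwo : (2:E) = 0 := CharTwo.two_eq_zero
  have hαq : α^(2^m) ≠ 0 := pow_ne_zero _ hα
  have hβq : β^(2^m) ≠ 0 := pow_ne_zero _ hβ
  have hAne : α^(2^m)*α ≠ 0 := mul_ne_zero hαq hα
  have hDne : (1+α^(2^m)*α+β^(2^m)*β) ≠ 0 := by
    intro h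
    have : β*(1 + α^(2^m)*α + β^(2^m)*β) + (α^(2^m))^2 = (α^(2^m))^2 := by
      rw [show (1 + α^(2^m)*α + β^(2^m)*β) = (0:E) from by linear_combination h]
      ring
    rw [h1] at this
    exact hαq (sq_eq_zero_iff.mp this.symm)
  have hsq : s^(2^m) ≠ 0 := pow_ne_zero _ hs
  have hrne : s^(2^m)*s ≠ 0 := mul_ne_zero hsq hs
  have hstq : s*t^(2^m) = s^(2^m) := by
    linear_combination ((t^(2^m)))*hst + (-(s^(2^m)))*htt + (-(s^(2^m)) + s*(t^(2^m)))*htwo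
  have hE1t : t*((α^(2^m)*s + α*s^(2^m)) + (β*t + β^(2^m)*t^(2^m)) + (α^(2^m)*α+β^(2^m)*β)*(s^(2^m)*s+1) + 1) = 0 := by
    linear_combination (1)*hP + (α + s*β*(β^(2^m)) + s*α*(α^(2^m)))*hst + ((β^(2^m)))*htt
  have E1 : (α^(2^m)*s + α*s^(2^m)) + (β*t + β^(2^m)*t^(2^m)) + (α^(2^m)*α+β^(2^m)*β)*(s^(2^m)*s+1) + 1 = 0 :=
    (mul_eq_zero.mp hE1t).resolve_left ht
  have htau : (1+α^(2^m)*α+β^(2^m)*β)*(s^(2^m)*s)*(β*t + β^(2^m)*t^(2^m)) = (α^(2^m)*s + α*s^(2^m))^2 := by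
    linear_combination (s*β + s*β^2*(β^(2^m)) + s*α*β*(α^(2^m)))*hst + ((s^(2^m))*(β^(2^m)) + (s^(2^m))*β*(β^(2^m))^2 + (s^(2^m))*α*(α^(2^m))*(β^(2^m)))*hstq + (-s^2)*h1 + (-(s^(2^m))^2)*h1q + ((s^(2^m))^2*(β^(2^m)) + (s^(2^m))^2*β*(β^(2^m))^2 + (s^(2^m))^2*α*(α^(2^m))*(β^(2^m)) - s*(s^(2^m))*α*(α^(2^m)) + s^2*β + s^2*β^2*(β^(2^m)) + s^2*α*β*(α^(2^m)))*htwo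
  have E2 : (α^(2^m)*s + α*s^(2^m))^2 + (1+α^(2^m)*α+β^(2^m)*β)*(s^(2^m)*s)*(α^(2^m)*s + α*s^(2^m)) + (α^(2^m)*α+β^(2^m)*β)*(1+α^(2^m)*α+β^(2^m)*β)*(s^(2^m)*s)^2 + (1+α^(2^m)*α+β^(2^m)*β)^2*(s^(2^m)*s) = 0 := by
    linear_combination (s*(s^(2^m)) + s*(s^(2^m))*β*(β^(2^m)) + s*(s^(2^m))*α*(α^(2^m)))*E1 + (1)*htau + ((s^(2^m))^2*α^2 + 2*s*(s^(2^m))*α*(α^(2^m)) - s*(s^(2^m))*(t^(2^m))*(β^(2^m)) - s*(s^(2^m))*(t^(2^m))*β*(β^(2^m))^2 - s*(s^(2^m))*(t^(2^m))*α*(α^(2^m))*(β^(2^m)) - s*t*(s^(2^m))*β - s*t*(s^(2^m))*β^2*(β^(2^m)) - s*t*(s^(2^m))*α*β*(α^(2^m)) + s^2*(α^(2^m))^2)*htwo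
  have hA2 : (α^(2^m)*α)^2 = (β^(2^m)*β)*(1+α^(2^m)*α+β^(2^m)*β)^2 := by
    linear_combination (α^2)*h1 + (-β - β^2*(β^(2^m)) - α*β*(α^(2^m)))*h1q
  have hrt : (s^(2^m)*s)*t = s^2 := by
    linear_combination (s)*hst
  -- the quantity ζ = σ/(D r) is fixed by the Frobenius power
  have hsigq : (α^(2^m)*s + α*s^(2^m))^(2^m) = α^(2^m)*s + α*s^(2^m) := by
    rw [frob_add, mul_pow, mul_pow, hfr, hfr]; ring
  have hrq : (s^(2^m)*s)^(2^m) = s^(2^m)*s := by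
    rw [mul_pow, hfr]; ring
  have hDq : (1+α^(2^m)*α+β^(2^m)*β)^(2^m) = 1+α^(2^m)*α+β^(2^m)*β := by
    rw [frob_add, frob_add, one_pow, mul_pow, mul_pow, hfr, hfr]; ring
  have hζq : ((α^(2^m)*s + α*s^(2^m))/((1+α^(2^m)*α+β^(2^m)*β)*(s^(2^m)*s)))^(2^m)
      = (α^(2^m)*s + α*s^(2^m))/((1+α^(2^m)*α+β^(2^m)*β)*(s^(2^m)*s)) := by
    rw [div_pow, mul_pow, hsigq, hrq, hDq]
  have TrA : traceSum m (((α^(2^m)*s + α*s^(2^m))/((1+α^(2^m)*α+β^(2^m)*β)*(s^(2^m)*s)))^2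
      + (α^(2^m)*s + α*s^(2^m))/((1+α^(2^m)*α+β^(2^m)*β)*(s^(2^m)*s))) = 0 :=
    traceSum_artin0 m _ hζq
  have key5 : ((α^(2^m)*s + α*s^(2^m))^2 + (α^(2^m)*s + α*s^(2^m))*((1+α^(2^m)*α+β^(2^m)*β)*(s^(2^m)*s)))*((1+α^(2^m)*α+β^(2^m)*β)*s^2)
      = ((α^(2^m)*α+β^(2^m)*β)*s^2 + (1+α^(2^m)*α+β^(2^m)*β)*t)*(((1+α^(2^m)*α+β^(2^m)*β)*(s^(2^m)*s))^2) := by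
    linear_combination ((1+α^(2^m)*α+β^(2^m)*β)*s^2)*E2 - ((1+α^(2^m)*α+β^(2^m)*β)^3*(s^(2^m)*s))*hrt + (-s^3*(s^(2^m)) - 3*s^3*(s^(2^m))*β*(β^(2^m)) - 3*s^3*(s^(2^m))*β^2*(β^(2^m))^2 - s^3*(s^(2^m))*β^3*(β^(2^m))^3 - 3*s^3*(s^(2^m))*α*(α^(2^m)) - 6*s^3*(s^(2^m))*α*β*(α^(2^m))*(β^(2^m)) - 3*s^3*(s^(2^m))*α*β^2*(α^(2^m))*(β^(2^m))^2 - 3*s^3*(s^(2^m))*α^2*(α^(2^m))^2 - 3*s^3*(s^(2^m))*α^2*β*(α^(2^m))^2*(β^(2^m)) - s^3*(s^(2^m))*α^3*(α^(2^m))^3 - s^4*(s^(2^m))^2*β*(β^(2^m)) - 2*s^4*(s^(2^m))^2*β^2*(β^(2^m))^2 - s^4*(s^(2^m))^2*β^3*(β^(2^m))^3 - s^4*(s^(2^m))^2*α*(α^(2^m)) - 4*s^4*(s^(2^m))^2*α*β*(α^(2^m))*(β^(2^m)) - 3*s^4*(s^(2^m))^2*α*β^2*(α^(2^m))*(β^(2^m))^2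 - 2*s^4*(s^(2^m))^2*α^2*(α^(2^m))^2 - 3*s^4*(s^(2^m))^2*α^2*β*(α^(2^m))^2*(β^(2^m)) - s^4*(s^(2^m))^2*α^3*(α^(2^m))^3)*htwo
  have hζeq : ((α^(2^m)*s + α*s^(2^m))/((1+α^(2^m)*α+β^(2^m)*β)*(s^(2^m)*s)))^2
      + (α^(2^m)*s + α*s^(2^m))/((1+α^(2^m)*α+β^(2^m)*β)*(s^(2^m)*s))
      = (α^(2^m)*α+β^(2^m)*β)/(1+α^(2^m)*α+β^(2^m)*β) + t/s^2 := by
    have hDr : (1+α^(2^m)*α+β^(2^m)*β)*(s^(2^m)*s) ≠ 0 := mul_ne_zero hDne hrne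
    have e1 : ((α^(2^m)*s + α*s^(2^m))/((1+α^(2^m)*α+β^(2^m)*β)*(s^(2^m)*s)))^2
        + (α^(2^m)*s + α*s^(2^m))/((1+α^(2^m)*α+β^(2^m)*β)*(s^(2^m)*s))
        = ((α^(2^m)*s + α*s^(2^m))^2 + (α^(2^m)*s + α*s^(2^m))*((1+α^(2^m)*α+β^(2^m)*β)*(s^(2^m)*s)))/(((1+α^(2^m)*α+β^(2^m)*β)*(s^(2^m)*s))^2) := by
      field_simp
    have e2 : (α^(2^m)*α+β^(2^m)*β)/(1+α^(2^m)*α+β^(2^m)*β) + t/s^2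
        = ((α^(2^m)*α+β^(2^m)*β)*s^2 + (1+α^(2^m)*α+β^(2^m)*β)*t)/((1+α^(2^m)*α+β^(2^m)*β)*s^2) := by
      field_simp
    rw [e1, e2, div_eq_div_iff (pow_ne_zero 2 hDr) (mul_ne_zero hDne (pow_ne_zero 2 hs))]
    linear_combination key5
  have hsum : (((α^(2^m)*s + α*s^(2^m))/((1+α^(2^m)*α+β^(2^m)*β)*(s^(2^m)*s)))^2
      + (α^(2^m)*s + α*s^(2^m))/((1+α^(2^m)*α+β^(2^m)*β)*(s^(2^m)*s))) + t/s^2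
      = (α^(2^m)*α+β^(2^m)*β)/(1+α^(2^m)*α+β^(2^m)*β) := by
    linear_combination hζeq + (t/s^2)*htwo
  have TrB : traceSum m (t/s^2) = 1 := by
    have h := traceSum_artin1 m z hzq
    rwa [hz1] at h
  have hATr : traceSum m ((α^(2^m)*α+β^(2^m)*β)/(1+α^(2^m)*α+β^(2^m)*β)) = 1 := by
    rw [← hsum, traceSum_add', TrA, TrB, zero_add]
  have hfac : ((β^(2^m)*β)*(1+α^(2^m)*α+β^(2^m)*β) - (α^(2^m)*α))
      * ((β^(2^m)*β)*(1+α^(2^m)*α+β^(2^m)*β) - (α^(2^m)*α)*(1+(1+α^(2^m)*α+β^(2^m)*β))) = 0 := by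
    linear_combination (2 + β*(β^(2^m)) + α*(α^(2^m)))*hA2 + (β*(β^(2^m)) + 3*β^2*(β^(2^m))^2 + 3*β^3*(β^(2^m))^3 + β^4*(β^(2^m))^4 + α*β*(α^(2^m))*(β^(2^m)) + 3*α*β^2*(α^(2^m))*(β^(2^m))^2 + 2*α*β^3*(α^(2^m))*(β^(2^m))^3 + α^2*β^2*(α^(2^m))^2*(β^(2^m))^2)*htwo
  rcases mul_eq_zero.mp hfac with hBD1 | hBD2
  · -- case 1 : B·D = A forces B = 1, contradicting h2
    have h5 : (α^(2^m)*α)*(α^(2^m)*α) = (α^(2^m)*α)*(1+α^(2^m)*α+β^(2^m)*β) := by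
      linear_combination (1 + β*(β^(2^m)) + α*(α^(2^m)))*hBD1 + (1)*hA2
    have hAD : α^(2^m)*α = 1+α^(2^m)*α+β^(2^m)*β := mul_left_cancel₀ hAne h5
    have hB1 : (β^(2^m)*β)*(1+α^(2^m)*α+β^(2^m)*β) = 1*(1+α^(2^m)*α+β^(2^m)*β) := by
      linear_combination hBD1 + hAD
    exact h2 (mul_right_cancel₀ hDne hB1)
  · -- case 2 : B·D = A·(1+D)
    have h6 : (α^(2^m)*α)*(α^(2^m)*α)
        = (α^(2^m)*α)*((1+α^(2^m)*α+β^(2^m)*β)*(1+(1+α^(2^m)*α+β^(2^m)*β))) := by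
      linear_combination (1 + β*(β^(2^m)) + α*(α^(2^m)))*hBD2 + (1)*hA2
    have hAc2 : α^(2^m)*α = (1+α^(2^m)*α+β^(2^m)*β)*(1+(1+α^(2^m)*α+β^(2^m)*β)) :=
      mul_left_cancel₀ hAne h6
    have h7 : (β^(2^m)*β)*(1+α^(2^m)*α+β^(2^m)*β)
        = ((1+(1+α^(2^m)*α+β^(2^m)*β))^2)*(1+α^(2^m)*α+β^(2^m)*β) := by
      linear_combination (1)*hBD2 + (2 + β*(β^(2^m)) + α*(α^(2^m)))*hAc2
    have hBc2 : β^(2^m)*β = (1+(1+α^(2^m)*α+β^(2^m)*β))^2 := mul_right_cancel₀ hDne h7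
    have hcross : (α^(2^m)*α+β^(2^m)*β)*(α^(2^m)*α) = (β^(2^m)*β)*(1+α^(2^m)*α+β^(2^m)*β) := by
      linear_combination (2 + 3*β*(β^(2^m)) + β^2*(β^(2^m))^2 + 4*α*(α^(2^m)) + 2*α*β*(α^(2^m))*(β^(2^m)) + α^2*(α^(2^m))^2)*hAc2 + (β*(β^(2^m)))*hAc2 + (1 + 2*β*(β^(2^m)) + β^2*(β^(2^m))^2 + 2*α*(α^(2^m)) + 2*α*β*(α^(2^m))*(β^(2^m)) + α^2*(α^(2^m))^2)*hBc2 + (4 + 12*β*(β^(2^m)) + 13*β^2*(β^(2^m))^2 + 6*β^3*(β^(2^m))^3 + β^4*(β^(2^m))^4 + 12*α*(α^(2^m)) + 26*α*β*(α^(2^m))*(β^(2^m)) + 18*α*β^2*(α^(2^m))*(β^(2^m))^2 + 4*α*β^3*(α^(2^m))*(β^(2^m))^3 + 13*α^2*(α^(2^m))^2 + 18*α^2*β*(α^(2^m))^2*(β^(2^m)) + 6*α^2*β^2*(α^(2^m))^2*(β^(2^m))^2 + 6*α^3*(α^(2^m))^3 + 4*α^3*β*(α^(2^m))^3*(β^(2^m))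 + α^4*(α^(2^m))^4)*htwo
    have hABBA : (α^(2^m)*α+β^(2^m)*β)/(1+α^(2^m)*α+β^(2^m)*β) = (β^(2^m)*β)/(α^(2^m)*α) := by
      rw [div_eq_div_iff hDne hAne]
      linear_combination hcross
    rw [hABBA, h3] at hATr
    exact zero_ne_one hATr

end helpers

set_option maxHeartbeats 2000000 in
/-- Sufficiency, case 2 (Tu–Zeng–Li–Helleseth): if
`β(1 + α^{q+1} + β^{q+1}) + α^{2q} = 0`, `β^{q+1} ≠ 1` and `Tr(β^{q+1}/α^{q+1}) = 0`
then `f(x) = x + α x^{q(q-1)+1} + β x^{2(q-1)+1}` permutes `F_{q^2}`. -/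
theorem stmt_18 {E : Type*} [Field E] [Fintype E] (m : ℕ) (hm : 0 < m)
    (hE : Fintype.card E = (2 ^ m) ^ 2) (α β : E) (hαβ : α * β ≠ 0)
    (h1 : β * (1 + α ^ (2 ^ m + 1) + β ^ (2 ^ m + 1)) + α ^ (2 * 2 ^ m) = 0)
    (h2 : β ^ (2 ^ m + 1) ≠ 1)
    (h3 : traceSum m (β ^ (2 ^ m + 1) / α ^ (2 ^ m + 1)) = 0) :
    Function.Bijective
      (fun x : E => x + α * x ^ (2 ^ m * (2 ^ m - 1) + 1) + β * x ^ (2 * (2 ^ m - 1) + 1)) := by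
  -- characteristic 2
  haveI hchar2 : CharP E 2 := by
    obtain ⟨p, hp⟩ := CharP.exists E
    haveI := hp
    have hprime : p.Prime := CharP.char_is_prime E p
    have hdvd : p ∣ Fintype.card E :=
      (CharP.cast_eq_zero_iff E p (Fintype.card E)).mp (Nat.cast_card_eq_zero E)
    rw [hE, ← pow_mul] at hdvd
    have hp2 : p = 2 :=
      (Nat.prime_dvd_prime_iff_eq hprime Nat.prime_two).mp (hprime.dvd_of_dvd_pow hdvd)
    rw [← hp2]; exact hp
  have htwo : (2:E) = 0 := CharTwo.two_eq_zero
  have hα : α ≠ 0 := left_ne_zero_of_mul hαβ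
  have hβ : β ≠ 0 := right_ne_zero_of_mul hαβ
  have hfr : ∀ a : E, (a^(2^m))^(2^m) = a := by
    intro a
    rw [← pow_mul]
    have h := FiniteField.pow_card a
    rw [hE, pow_two] at h
    exact h
  -- hypotheses in "atomic" form
  have h1' : β*(1 + α^(2^m)*α + β^(2^m)*β) + (α^(2^m))^2 = 0 := by
    have e1 : α ^ (2^m+1) = α^(2^m)*α := pow_succ α (2^m)
    have e2 : β ^ (2^m+1) = β^(2^m)*β := pow_succ β (2^m)
    have e3 : α ^ (2*2^m) = (α^(2^m))^2 := by
      rw [mul_comm 2 (2^m), pow_mul]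
    rw [e1, e2, e3] at h1
    exact h1
  have h1q' : β^(2^m)*(1 + α^(2^m)*α + β^(2^m)*β) + α^2 = 0 := by
    have hfr2 : ((α^(2^m))^2)^(2^m) = α^2 := by
      rw [← pow_mul, mul_comm 2 (2^m), pow_mul, hfr]
    have h := congrArg (· ^ (2^m)) h1'
    rw [frob_add, mul_pow, frob_add, frob_add, one_pow, mul_pow, mul_pow,
      hfr, hfr, hfr2,
      zero_pow (Nat.pos_of_ne_zero (by positivity)).ne'] at h
    linear_combination h
  have h2' : β^(2^m)*β ≠ 1 := by
    rw [← pow_succ]; exact h2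
  have h3' : traceSum m ((β^(2^m)*β)/(α^(2^m)*α)) = 0 := by
    rw [← pow_succ, ← pow_succ]; exact h3
  -- unit-circle facts for nonzero x
  have hyμ : ∀ x : E, x ≠ 0 → (x^(2^m-1))^(2^m) * x^(2^m-1) = 1 := by
    intro x hx
    rw [← pow_mul, ← pow_add]
    have hcard := FiniteField.pow_card_sub_one_eq_one x hx
    rw [hE] at hcard
    have hexp : (2^m-1)*2^m + (2^m-1) = (2^m)^2 - 1 := by
      obtain ⟨w, hw⟩ : ∃ w, 2^m = w+1 := ⟨2^m-1, by have := Nat.one_le_two_pow (n := m); omega⟩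
      rw [hw]
      simp only [Nat.add_sub_cancel]
      have h' : (w+1)^2 = w*(w+1)+w+1 := by ring
      omega
    rw [hexp]; exact hcard
  have hone : ∀ x : E, x ≠ 0 → x^((2^m-1)*(2^m+1)) = 1 := by
    intro x hx
    rw [pow_mul, pow_succ]
    exact hyμ x hx
  have hDpne : ∀ x : E, x ≠ 0 → β*(x^(2^m-1))^3 + x^(2^m-1) + α ≠ 0 := fun x hx =>
    keyD m α β hα hβ hfr h1' h3' _ (hyμ x hx)
  have hfx : ∀ x : E, x ≠ 0 →
      (x + α*x^(2^m*(2^m-1)+1) + β*x^(2*(2^m-1)+1)) * x^(2^m-1)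
        = x * (β*(x^(2^m-1))^3 + x^(2^m-1) + α) := by
    intro x hx
    have e1 : x^(2^m*(2^m-1)+1) * x^(2^m-1) = x := by
      rw [← pow_add]
      have he : 2^m*(2^m-1)+1+(2^m-1) = (2^m-1)*(2^m+1)+1 := by ring
      rw [he, pow_succ, hone x hx, one_mul]
    have e2 : x^(2*(2^m-1)+1) * x^(2^m-1) = x*(x^(2^m-1))^3 := by
      rw [← pow_add, ← pow_mul, ← pow_succ']
      congr 1
      omega
    linear_combination α*e1 + β*e2
  have hfq : ∀ x : E, x ≠ 0 →
      (x + α*x^(2^m*(2^m-1)+1) + β*x^(2*(2^m-1)+1))^(2^m) * x^(2^m-1)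
        = x * (α^(2^m)*(x^(2^m-1))^3 + (x^(2^m-1))^2 + β^(2^m)) := by
    intro x hx
    rw [frob_add, frob_add, mul_pow, mul_pow, ← pow_mul, ← pow_mul]
    have t1 : x^(2^m) * x^(2^m-1) = x*(x^(2^m-1))^2 := by
      rw [← pow_add, ← pow_mul, ← pow_succ']
      congr 1
      have := Nat.one_le_two_pow (n := m); omega
    have t2 : x^((2^m*(2^m-1)+1)*2^m) * x^(2^m-1) = x*(x^(2^m-1))^3 := by
      rw [← pow_add]
      have he : (2^m*(2^m-1)+1)*2^m + (2^m-1) = ((2^m-1)*(2^m+1))*(2^m-1) + ((2^m-1)*3+1) := by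
        obtain ⟨w, hw⟩ : ∃ w, 2^m = w+1 := ⟨2^m-1, by have := Nat.one_le_two_pow (n := m); omega⟩
        rw [hw]
        simp only [Nat.add_sub_cancel]
        ring
      rw [he, pow_add, pow_mul, hone x hx, one_pow, one_mul, ← pow_mul, ← pow_succ']
    have t3 : x^((2*(2^m-1)+1)*2^m) * x^(2^m-1) = x := by
      rw [← pow_add]
      have he : (2*(2^m-1)+1)*2^m + (2^m-1) = ((2^m-1)*(2^m+1))*2 + 1 := by
        obtain ⟨w, hw⟩ : ∃ w, 2^m = w+1 := ⟨2^m-1, by have := Nat.one_le_two_pow (n := m); omega⟩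
        rw [hw]
        simp only [Nat.add_sub_cancel]
        ring
      rw [he, pow_add, pow_mul, hone x hx, one_pow, one_mul, pow_one]
    linear_combination α^(2^m)*t2 + β^(2^m)*t3 + t1
  have hfne : ∀ x : E, x ≠ 0 → (x + α*x^(2^m*(2^m-1)+1) + β*x^(2*(2^m-1)+1)) ≠ 0 := by
    intro x hx h0
    have h := hfx x hx
    rw [h0, zero_mul] at h
    exact mul_ne_zero hx (hDpne x hx) h.symm
  have hf00 : (0:E) + α*(0:E)^(2^m*(2^m-1)+1) + β*(0:E)^(2*(2^m-1)+1) = 0 := by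
    rw [zero_pow (by omega : 2^m*(2^m-1)+1 ≠ 0), zero_pow (by omega : 2*(2^m-1)+1 ≠ 0)]
    ring
  -- injectivity suffices
  rw [← Finite.injective_iff_bijective]
  intro x1 x2 hf12
  simp only at hf12
  by_cases hx1 : x1 = 0
  · by_cases hx2 : x2 = 0
    · rw [hx1, hx2]
    · exfalso
      rw [hx1, hf00] at hf12
      exact hfne x2 hx2 hf12.symm
  · by_cases hx2 : x2 = 0
    · exfalso
      rw [hx2, hf00] at hf12
      exact hfne x1 hx1 hf12
    · -- both nonzero
      have F1 := hfx x1 hx1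
      have F2 := hfx x2 hx2
      have G1 := hfq x1 hx1
      have G2 := hfq x2 hx2
      have key : (x1 * (α^(2^m)*(x1^(2^m-1))^3 + (x1^(2^m-1))^2 + β^(2^m)))
          * (x2 * (β*(x2^(2^m-1))^3 + x2^(2^m-1) + α))
          = (x2 * (α^(2^m)*(x2^(2^m-1))^3 + (x2^(2^m-1))^2 + β^(2^m)))
          * (x1 * (β*(x1^(2^m-1))^3 + x1^(2^m-1) + α)) := by
        rw [← G1, ← F2, ← G2, ← F1, hf12]
        ring
      have key2 : (x1*x2)*((α^(2^m)*(x1^(2^m-1))^3 + (x1^(2^m-1))^2 + β^(2^m))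
          * (β*(x2^(2^m-1))^3 + x2^(2^m-1) + α))
          = (x1*x2)*((α^(2^m)*(x2^(2^m-1))^3 + (x2^(2^m-1))^2 + β^(2^m))
          * (β*(x1^(2^m-1))^3 + x1^(2^m-1) + α)) := by
        linear_combination key
      have hg : (α^(2^m)*(x1^(2^m-1))^3 + (x1^(2^m-1))^2 + β^(2^m))
          * (β*(x2^(2^m-1))^3 + x2^(2^m-1) + α)
          = (α^(2^m)*(x2^(2^m-1))^3 + (x2^(2^m-1))^2 + β^(2^m))
          * (β*(x1^(2^m-1))^3 + x1^(2^m-1) + α) :=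
        mul_left_cancel₀ (mul_ne_zero hx1 hx2) key2
      by_cases hyeq : x1^(2^m-1) = x2^(2^m-1)
      · -- equal circle parts: cancel
        rw [hf12, hyeq] at F1
        have := F1.symm.trans F2
        exact mul_right_cancel₀ (hDpne x2 hx2) this
      · exfalso
        set y1 := x1^(2^m-1) with hy1def
        set y2 := x2^(2^m-1) with hy2def
        have hy1 := hyμ x1 hx1
        have hy2 := hyμ x2 hx2
        rw [← hy1def] at hy1
        rw [← hy2def] at hy2
        have hy1ne : y1 ≠ 0 := pow_ne_zero _ hx1
        have hy2ne : y2 ≠ 0 := pow_ne_zero _ hx2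
        have hsne : y1 + y2 ≠ 0 := by
          intro h
          exact hyeq (by linear_combination h - y2*htwo)
        have htne : y1 * y2 ≠ 0 := mul_ne_zero hy1ne hy2ne
        have hfacP : (y1+y2)*(α^(2^m)*(y1*y2)*(y1+y2) + (α^(2^m)*α+β^(2^m)*β)*((y1+y2)^2+(y1*y2)) + β*(y1*y2)^2 + (y1*y2) + α*(y1+y2) + β^(2^m)) = 0 := by
          linear_combination (1)*hg + (y2^2*α + y2^3*α*(α^(2^m)) + y1*(β^(2^m)) + y1*y2*α + y1*y2^2 + 2*y1*y2^2*β*(β^(2^m)) + 2*y1*y2^2*α*(α^(2^m)) + y1*y2^3*(α^(2^m)) + 2*y1^2*y2*β*(β^(2^m)) + 2*y1^2*y2*α*(α^(2^m)) + y1^2*y2^2*(α^(2^m)) + y1^3*β*(β^(2^m)) + y1^3*y2^2*β)*htwo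
        have hP0 : α^(2^m)*(y1*y2)*(y1+y2) + (α^(2^m)*α+β^(2^m)*β)*((y1+y2)^2+(y1*y2)) + β*(y1*y2)^2 + (y1*y2) + α*(y1+y2) + β^(2^m) = 0 :=
          (mul_eq_zero.mp hfacP).resolve_left hsne
        have hst : (y1+y2)^(2^m)*(y1*y2) = y1+y2 := by
          rw [frob_add]
          linear_combination y2*hy1 + y1*hy2
        have htt : ((y1*y2)^(2^m))*(y1*y2) = 1 := by
          rw [mul_pow]
          linear_combination (y2^(2^m)*y2)*hy1 + hy2
        have hz1 : (y1/(y1+y2))^2 + y1/(y1+y2) = (y1*y2)/(y1+y2)^2 := by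
          field_simp
          linear_combination y1*htwo
        have hzq : (y1/(y1+y2))^(2^m) = y1/(y1+y2) + 1 := by
          have hsqne : y1^(2^m)+y2^(2^m) ≠ 0 := by
            rw [← frob_add]; exact pow_ne_zero _ hsne
          have e1 : y1/(y1+y2) + 1 = (y1+(y1+y2))/(y1+y2) := by
            field_simp
          rw [div_pow, frob_add, e1, div_eq_div_iff hsqne hsne]
          linear_combination -hy1 - hy2 + (-1 - y1*(y2^(2^m)))*htwo
        exact keyP m α β hα hβ hfr h1' h1q' h2' h3' (y1+y2) (y1*y2) hsne htne hst htt
          (y1/(y1+y2)) hz1 hzq hP0
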